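/- The tangent vector Ψ_l = ∂Ψ/∂l = (0, ..., 0, ∂ξ_0/∂l, ..., ∂ξ_{m+1}/∂l) lies in the kernel of the Jacobian J(Ψ(s,l)) of the combined model, i.e. J_{f_2}^z · (∂ξ/∂l) = 0, where ξ satisfies the same recursion structure as γ with parameters (η, η_c, M̄, δ) in place of (λ, λ_c, G, ν). -/

import Mathlib

open Matrix

/-- The flow Jacobian block with parameters `(M̄, η, η_c, δ)`: this is
`J_{f₂}^z` (eq. (jacobiXi) of the paper), of the same structure as `J_{f₁}`. -/
noncomputable def flowJacobian (m : ℕ) (Mbar eta etac delta : ℝ) (ξ : ℕ → ℝ) :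
    Matrix (Fin (m + 2)) (Fin (m + 2)) ℝ :=
  Matrix.of fun i j =>
    if i.val = 0 then
      if j.val = 0 then -Mbar * eta * (1 - ξ 1)
      else if j.val = 1 then Mbar * eta * ξ 0
      else if j.val = m then Mbar * etac else 0
    else if i.val = 1 then
      if j.val = 0 then eta * (1 - ξ 1)
      else if j.val = 1 then -etac * (1 - ξ 2) - eta * ξ 0
      else if j.val = 2 then etac * ξ 1 else 0
    else if i.val = m then
      if j.val = m - 1 then etac * (1 - ξ m)
      else if j.val = m then -etac * (1 + ξ (m - 1)) else 0
    else if i.val = m + 1 then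
      if j.val = m then Mbar * etac
      else if j.val = m + 1 then -delta else 0
    else
      if j.val = i.val - 1 then etac * (1 - ξ i.val)
      else if j.val = i.val then -etac * (1 - ξ (i.val + 1) + ξ (i.val - 1))
      else if j.val = i.val + 1 then etac * ξ i.val else 0

private lemma sum_ite3 {n : ℕ} (f : Fin n → ℝ) (a b c : Fin n) (A B C : ℝ)
    (h : ∀ j, f j = (if j = a then A else 0) + (if j = b then B else 0)
        + (if j = c then C else 0)) :
    ∑ j, f j = A + B + C := by
  simp only [h, Finset.sum_add_distrib, Finset.sum_ite_eq', Finset.mem_univ, if_true]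

private lemma sum_ite2 {n : ℕ} (f : Fin n → ℝ) (a b : Fin n) (A B : ℝ)
    (h : ∀ j, f j = (if j = a then A else 0) + (if j = b then B else 0)) :
    ∑ j, f j = A + B := by
  simp only [h, Finset.sum_add_distrib, Finset.sum_ite_eq', Finset.mem_univ, if_true]

/-- The tangent vector `Ψ_l = (0, …, 0, ∂ξ₀/∂l, …, ∂ξ_{m+1}/∂l)`
lies in the kernel of the Jacobian of the combined model, i.e.
`J_{f₂}^z · (∂ξ/∂l) = 0`, where `ξ` satisfies the same recursion as `γ` with
parameters `(η, η_c, M̄, δ)` in place of `(λ, λ_c, G, ν)`. -/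
theorem Psi_l_in_kernel
    (m : ℕ) (hm : 2 ≤ m) (Mbar eta etac delta : ℝ)
    (hM : 0 < Mbar) (heta : 0 < eta) (hetac : 0 < etac) (hdelta : 0 < delta)
    (lbar : ℝ) (hlbar : 0 < lbar)
    (ξ ξ' : ℕ → ℝ → ℝ)
    (hξm : ∀ l ∈ Set.Ioo 0 lbar, ξ m l = l)
    (hξmid : ∀ i, 1 ≤ i → i ≤ m - 1 → ∀ l ∈ Set.Ioo 0 lbar,
      ξ i l = l / (1 - ξ (i + 1) l))
    (hξ0 : ∀ l ∈ Set.Ioo 0 lbar, ξ 0 l = etac * l / (eta * (1 - ξ 1 l)))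
    (hξlast : ∀ l ∈ Set.Ioo 0 lbar, ξ (m + 1) l = Mbar * etac / delta * l)
    (hbound : ∀ i, 1 ≤ i → i ≤ m → ∀ l ∈ Set.Ioo 0 lbar, ξ i l ∈ Set.Ioo (0 : ℝ) 1)
    (hderiv : ∀ i, i ≤ m + 1 → ∀ l ∈ Set.Ioo 0 lbar, HasDerivAt (ξ i) (ξ' i l) l) :
    ∀ l ∈ Set.Ioo 0 lbar,
      (flowJacobian m Mbar eta etac delta (fun i => ξ i l)).mulVec
        (fun j : Fin (m + 2) => ξ' j.val l) = 0 := by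
  intro l hl
  have hIoo : Set.Ioo (0:ℝ) lbar ∈ nhds l := isOpen_Ioo.mem_nhds hl
  have hne : ∀ k, 1 ≤ k → k ≤ m → ∀ l' ∈ Set.Ioo (0:ℝ) lbar, 1 - ξ k l' ≠ 0 := by
    intro k h1 h2 l' hl'
    have := (hbound k h1 h2 l' hl').2
    intro h; linarith
  have hprod : ∀ i, 1 ≤ i → i ≤ m - 1 → ∀ l' ∈ Set.Ioo (0:ℝ) lbar,
      ξ i l' * (1 - ξ (i+1) l') = l' := by
    intro i h1 h2 l' hl'
    have h3 := hξmid i h1 h2 l' hl'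
    have h4 := hne (i+1) (by omega) (by omega) l' hl'
    rw [h3]; field_simp
  have key : ∀ i, 1 ≤ i → i ≤ m - 1 →
      ξ' i l * (1 - ξ (i+1) l) - ξ i l * ξ' (i+1) l = 1 := by
    intro i h1 h2
    have hd : HasDerivAt (fun t => ξ i t * (1 - ξ (i+1) t))
        (ξ' i l * (1 - ξ (i+1) l) + ξ i l * (0 - ξ' (i+1) l)) l :=
      (hderiv i (by omega) l hl).mul
        ((hasDerivAt_const l 1).sub (hderiv (i+1) (by omega) l hl))
    have heq : (fun t => ξ i t * (1 - ξ (i+1) t)) =ᶠ[nhds l] id := by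
      filter_upwards [hIoo] with t ht
      exact hprod i h1 h2 t ht
    have hd2 : HasDerivAt (fun t => ξ i t * (1 - ξ (i+1) t)) 1 l :=
      (hasDerivAt_id l).congr_of_eventuallyEq heq
    have := hd.unique hd2
    linarith [this]
  have hderm : ξ' m l = 1 := by
    have heq : ξ m =ᶠ[nhds l] id := by
      filter_upwards [hIoo] with t ht; exact hξm t ht
    exact (hderiv m (by omega) l hl).unique ((hasDerivAt_id l).congr_of_eventuallyEq heq)
  have hderlast : ξ' (m+1) l = Mbar * etac / delta := by
    have heq : ξ (m+1) =ᶠ[nhds l] (fun t => Mbar * etac / delta * t) := by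
      filter_upwards [hIoo] with t ht; exact hξlast t ht
    have hd2 : HasDerivAt (fun t => Mbar * etac / delta * t) (Mbar * etac / delta) l := by
      simpa using (hasDerivAt_id l).const_mul (Mbar * etac / delta)
    exact (hderiv (m+1) le_rfl l hl).unique (hd2.congr_of_eventuallyEq heq)
  have key0 : eta * (ξ' 0 l * (1 - ξ 1 l)) - eta * (ξ 0 l * ξ' 1 l) = etac := by
    have hprod0 : ∀ l' ∈ Set.Ioo (0:ℝ) lbar,
        eta * (ξ 0 l' * (1 - ξ 1 l')) = etac * l' := by
      intro l' hl'
      have h3 := hξ0 l' hl'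
      have h4 := hne 1 le_rfl (by omega) l' hl'
      rw [h3]; field_simp
    have hd : HasDerivAt (fun t => eta * (ξ 0 t * (1 - ξ 1 t)))
        (eta * (ξ' 0 l * (1 - ξ 1 l) + ξ 0 l * (0 - ξ' 1 l))) l :=
      ((hderiv 0 (by omega) l hl).mul
        ((hasDerivAt_const l 1).sub (hderiv 1 (by omega) l hl))).const_mul eta
    have heq : (fun t => eta * (ξ 0 t * (1 - ξ 1 t))) =ᶠ[nhds l] (fun t => etac * t) := by
      filter_upwards [hIoo] with t ht; exact hprod0 t ht
    have hd2 : HasDerivAt (fun t => etac * t) etac l := by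
      simpa using (hasDerivAt_id l).const_mul etac
    have := hd.unique (hd2.congr_of_eventuallyEq heq)
    linear_combination this
  funext i
  show ∑ j, flowJacobian m Mbar eta etac delta (fun k => ξ k l) i j * ξ' j.val l = 0
  by_cases hi0 : i.val = 0
  · rw [sum_ite3 _ ⟨0, by omega⟩ ⟨1, by omega⟩ ⟨m, by omega⟩
      (-Mbar * eta * (1 - ξ 1 l) * ξ' 0 l) (Mbar * eta * ξ 0 l * ξ' 1 l)
      (Mbar * etac * ξ' m l) ?_]
    · rw [hderm]; linear_combination (-Mbar) * key0
    · rintro ⟨jv, hjlt⟩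
      simp only [flowJacobian, Matrix.of_apply]
      rw [if_pos hi0]
      simp only [Fin.ext_iff]
      split_ifs <;> first | omega | ring1 | (subst_vars; (first | ring1 | omega))
  · by_cases hi1 : i.val = 1
    · rw [sum_ite3 _ ⟨0, by omega⟩ ⟨1, by omega⟩ ⟨2, by omega⟩
        (eta * (1 - ξ 1 l) * ξ' 0 l) ((-etac * (1 - ξ 2 l) - eta * ξ 0 l) * ξ' 1 l)
        (etac * ξ 1 l * ξ' 2 l) ?_]
      · have k1 := key 1 le_rfl (by omega)
        linear_combination key0 - etac * k1
      · rintro ⟨jv, hjlt⟩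
        simp only [flowJacobian, Matrix.of_apply]
        rw [if_neg hi0, if_pos hi1]
        simp only [Fin.ext_iff]
        split_ifs <;> first | omega | ring1 | (subst_vars; (first | ring1 | omega))
    · by_cases him : i.val = m
      · rw [sum_ite2 _ ⟨m - 1, by omega⟩ ⟨m, by omega⟩
          (etac * (1 - ξ m l) * ξ' (m - 1) l) (-etac * (1 + ξ (m - 1) l) * ξ' m l) ?_]
        · have hm1 : m - 1 + 1 = m := by omega
          have k1 := key (m - 1) (by omega) (by omega)
          rw [hm1] at k1
          rw [hderm] at k1 ⊢
          linear_combination etac * k1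
        · rintro ⟨jv, hjlt⟩
          simp only [flowJacobian, Matrix.of_apply]
          rw [if_neg hi0, if_neg hi1, if_pos him]
          simp only [Fin.ext_iff]
          split_ifs <;> first | omega | ring1 | (subst_vars; (first | ring1 | omega))
      · by_cases him1 : i.val = m + 1
        · rw [sum_ite2 _ ⟨m, by omega⟩ ⟨m + 1, by omega⟩
            (Mbar * etac * ξ' m l) (-delta * ξ' (m + 1) l) ?_]
          · rw [hderm, hderlast]
            have hd0 : delta ≠ 0 := ne_of_gt hdelta
            field_simp
            ring
          · rintro ⟨jv, hjlt⟩
            simp only [flowJacobian, Matrix.of_apply]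
            rw [if_neg hi0, if_neg hi1, if_neg him, if_pos him1]
            simp only [Fin.ext_iff]
            split_ifs <;> first | omega | ring1 | (subst_vars; (first | ring1 | omega))
        · have hik : 2 ≤ i.val ∧ i.val ≤ m - 1 := by
            have := i.isLt; omega
          obtain ⟨hik2, hikm⟩ := hik
          rw [sum_ite3 _ ⟨i.val - 1, by omega⟩ ⟨i.val, by omega⟩ ⟨i.val + 1, by omega⟩
            (etac * (1 - ξ i.val l) * ξ' (i.val - 1) l)
            (-etac * (1 - ξ (i.val + 1) l + ξ (i.val - 1) l) * ξ' i.val l)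
            (etac * ξ i.val l * ξ' (i.val + 1) l) ?_]
          · have hm1 : i.val - 1 + 1 = i.val := by omega
            have k0 := key (i.val - 1) (by omega) (by omega)
            rw [hm1] at k0
            have k2 := key i.val (by omega) hikm
            linear_combination etac * k0 - etac * k2
          · rintro ⟨jv, hjlt⟩
            simp only [flowJacobian, Matrix.of_apply]
            rw [if_neg hi0, if_neg hi1, if_neg him, if_neg him1]
            simp only [Fin.ext_iff]
            split_ifs <;> first | omega | ring1 | (subst_vars; (first | ring1 | omega))
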